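/- Let n ≥ 1 be an integer, γ ∈ (0,∞) \ ℕ with ⌊γ⌋ ≥ 1, and let j be an integer with 0 ≤ j ≤ ⌊γ⌋ − ⌊γ/2⌋ − 1. For smooth g : (0,∞) → ℝ set Δ̃g(ρ) = ρ² g''(ρ) − (2n+1) ρ g'(ρ) + (n+1)² g(ρ). Then for every ρ > 0, ρ^{−(n+1)+γ−2j−2[γ]} · [ ∏_{ℓ=0}^{j} (Δ̃ − (γ−2ℓ)²) ∘ ∏_{ℓ=0}^{j−1} (Δ̃ − (γ+2ℓ−2⌊γ⌋)²) ] applied to the function ρ ↦ ρ^{n+1−γ+2j+2[γ]} equals the constant −4^{2j+1} · j! · Γ(j+1+[γ]) Γ(⌊γ⌋+1−j) Γ(⌊γ⌋+1−j−[γ]) / ( Γ([γ]) Γ(⌊γ⌋−2j) Γ(⌊γ⌋+1−2j−[γ]) ). (All displayed factors commute, so the composition may be taken in any fixed order.) -/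

import Mathlib

noncomputable section

open scoped Real

/-- The radial part of the shifted complex-hyperbolic Laplacian:
Δ̃ g (ρ) = ρ² g''(ρ) − (2n+1) ρ g'(ρ) + (n+1)² g(ρ). -/
def radOp (n : ℕ) (g : ℝ → ℝ) : ℝ → ℝ :=
  fun ρ => ρ ^ 2 * deriv (deriv g) ρ - (2 * n + 1) * ρ * deriv g ρ + ((n : ℝ) + 1) ^ 2 * g ρ

/-- Apply the product of the commuting factors (Δ̃ − c), one for each `c` in the list `cs`. -/
def radProd (n : ℕ) (cs : List ℝ) (g : ℝ → ℝ) : ℝ → ℝ :=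
  cs.foldr (fun c h => fun ρ => radOp n h ρ - c * h ρ) g

lemma deriv_aux (D a : ℝ) (h : ℝ → ℝ) (hyp : ∀ x ∈ Set.Ioi (0:ℝ), h x = D * x ^ a) :
    ∀ ρ ∈ Set.Ioi (0:ℝ), deriv h ρ = D * a * ρ ^ (a - 1) := by
  intro ρ hρ
  have hev : h =ᶠ[nhds ρ] fun x => D * x ^ a :=
    Filter.eventuallyEq_of_mem (isOpen_Ioi.mem_nhds hρ) hyp
  rw [hev.deriv_eq]
  rw [deriv_const_mul _ (Real.differentiableAt_rpow_const_of_ne a (ne_of_gt hρ)),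
    Real.deriv_rpow_const ρ a]
  ring

lemma step_aux (n : ℕ) (D a c : ℝ) (h : ℝ → ℝ)
    (hyp : ∀ x ∈ Set.Ioi (0:ℝ), h x = D * x ^ a) :
    ∀ ρ ∈ Set.Ioi (0:ℝ),
      radOp n h ρ - c * h ρ = (((a - n - 1) ^ 2 - c) * D) * ρ ^ a := by
  intro ρ hρ
  have hρ' : (0:ℝ) < ρ := hρ
  have h1 := deriv_aux D a h hyp
  have h2 : deriv (deriv h) ρ = (D * a) * (a - 1) * ρ ^ (a - 1 - 1) := by
    have := deriv_aux (D * a) (a - 1) (deriv h) h1 ρ hρ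
    rw [this]
  rw [radOp, h2, h1 ρ hρ, hyp ρ hρ]
  have e1 : ρ ^ 2 * ρ ^ (a - 1 - 1) = ρ ^ a := by
    rw [← Real.rpow_two, ← Real.rpow_add hρ']; ring_nf
  have e2 : ρ * ρ ^ (a - 1) = ρ ^ a := by
    nth_rewrite 1 [← Real.rpow_one ρ]
    rw [← Real.rpow_add hρ']; ring_nf
  calc ρ ^ 2 * (D * a * (a - 1) * ρ ^ (a - 1 - 1)) - (2 * n + 1) * ρ * (D * a * ρ ^ (a - 1)) +
        ((n:ℝ) + 1) ^ 2 * (D * ρ ^ a) - c * (D * ρ ^ a)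
      = D * a * (a-1) * (ρ ^ 2 * ρ ^ (a-1-1)) - (2*n+1) * (D*a) * (ρ * ρ ^ (a-1)) +
        ((n:ℝ)+1)^2 * D * ρ ^ a - c * D * ρ ^ a := by ring
    _ = (((a - n - 1) ^ 2 - c) * D) * ρ ^ a := by rw [e1, e2]; ring

lemma radProd_rpow (n : ℕ) (a : ℝ) :
    ∀ (cs : List ℝ) (D : ℝ) (h : ℝ → ℝ), (∀ x ∈ Set.Ioi (0:ℝ), h x = D * x ^ a) →
      ∀ ρ ∈ Set.Ioi (0:ℝ),
        radProd n cs h ρ = ((cs.map (fun c => (a - n - 1) ^ 2 - c)).prod * D) * ρ ^ a := by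
  intro cs
  induction cs with
  | nil => intro D h hyp ρ hρ; simpa [radProd] using hyp ρ hρ
  | cons c cs ih =>
    intro D h hyp ρ hρ
    have key : ∀ x ∈ Set.Ioi (0:ℝ),
        radProd n cs h x = ((cs.map (fun c => (a - n - 1) ^ 2 - c)).prod * D) * x ^ a :=
      fun x hx => ih D h hyp x hx
    have hrw : radProd n (c :: cs) h ρ = radOp n (radProd n cs h) ρ - c * radProd n cs h ρ := rfl
    rw [hrw, step_aux n _ a c _ key ρ hρ]
    rw [List.map_cons, List.prod_cons]
    ring

lemma list_prod_range (f : ℕ → ℝ) (m : ℕ) :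
    ((List.range m).map f).prod = ∏ i ∈ Finset.range m, f i := by
  induction m with
  | zero => simp
  | succ m ih =>
    rw [List.range_succ, List.map_append, List.prod_append, Finset.prod_range_succ, ih]
    simp

lemma reflect_cast (f : ℝ → ℝ) (m : ℕ) :
    ∏ ℓ ∈ Finset.range m, f ((m : ℝ) - 1 - (ℓ : ℝ)) = ∏ i ∈ Finset.range m, f (i : ℝ) := by
  rw [← Finset.prod_range_reflect (fun i => f (i : ℝ)) m]
  refine Finset.prod_congr rfl fun ℓ hℓ => ?_
  rw [Finset.mem_range] at hℓ
  congr 1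
  have h1 : ℓ ≤ m - 1 := by omega
  have h2 : 1 ≤ m := by omega
  rw [Nat.cast_sub h1, Nat.cast_sub h2, Nat.cast_one]

lemma split_const (m : ℕ) (h : ℕ → ℝ) :
    ∏ ℓ ∈ Finset.range m, ((-4) * h ℓ) = (-4 : ℝ) ^ m * ∏ ℓ ∈ Finset.range m, h ℓ := by
  rw [Finset.prod_mul_distrib, Finset.prod_const, Finset.card_range]

lemma factProd (j : ℕ) : ∏ i ∈ Finset.range j, ((i : ℝ) + 1) = (Nat.factorial j : ℝ) := by
  induction j with
  | zero => simp
  | succ j ih => rw [Finset.prod_range_succ, ih, Nat.factorial_succ]; push_cast; ring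

lemma gammaProd (x : ℝ) (k : ℕ) (hx : ∀ i : ℕ, i < k → x + i ≠ 0) :
    Real.Gamma (x + k) = (∏ i ∈ Finset.range k, (x + i)) * Real.Gamma x := by
  induction k with
  | zero => simp
  | succ k ih =>
    have e : x + ((k + 1 : ℕ) : ℝ) = (x + k) + 1 := by push_cast; ring
    rw [e, Real.Gamma_add_one (hx k (by omega)), ih (fun i hi => hx i (by omega)),
      Finset.prod_range_succ]
    ring

lemma bigProd (ε F : ℝ) (j : ℕ) :
    (∏ ℓ ∈ Finset.range (j + 1), ((ε + 2 * j - F) ^ 2 - ((F + ε) - 2 * ℓ) ^ 2)) *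
      (∏ ℓ ∈ Finset.range j, ((ε + 2 * j - F) ^ 2 - ((F + ε) + 2 * ℓ - 2 * F) ^ 2))
    = (-4 : ℝ) ^ (2 * j + 1) * (Nat.factorial j : ℝ) *
      (∏ i ∈ Finset.range (j + 1), (ε + i)) *
      ((∏ i ∈ Finset.range (j + 1), (F - 2 * j + i)) *
       (∏ i ∈ Finset.range j, (F + 1 - 2 * j - ε + i))) := by
  have r12 : ∏ ℓ ∈ Finset.range (j + 1),
        ((F - 2 * (j : ℝ) + (((j + 1 : ℕ) : ℝ) - 1 - ℓ)) * (ε + (((j + 1 : ℕ) : ℝ) - 1 - ℓ)))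
      = ∏ i ∈ Finset.range (j + 1), ((F - 2 * (j : ℝ) + i) * (ε + i)) :=
    reflect_cast (fun x => (F - 2 * (j : ℝ) + x) * (ε + x)) (j + 1)
  have r3 : ∏ ℓ ∈ Finset.range j,
        ((((j : ℕ) : ℝ) - 1 - ℓ + 1) * (F + 1 - 2 * (j : ℝ) - ε + (((j : ℕ) : ℝ) - 1 - ℓ)))
      = ∏ i ∈ Finset.range j, (((i : ℝ) + 1) * (F + 1 - 2 * (j : ℝ) - ε + i)) :=
    reflect_cast (fun x => (x + 1) * (F + 1 - 2 * (j : ℝ) - ε + x)) j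
  calc (∏ ℓ ∈ Finset.range (j + 1), ((ε + 2 * j - F) ^ 2 - ((F + ε) - 2 * ℓ) ^ 2)) *
      (∏ ℓ ∈ Finset.range j, ((ε + 2 * j - F) ^ 2 - ((F + ε) + 2 * ℓ - 2 * F) ^ 2))
      = (∏ ℓ ∈ Finset.range (j + 1), ((-4) *
          ((F - 2 * (j : ℝ) + (((j + 1 : ℕ) : ℝ) - 1 - ℓ)) * (ε + (((j + 1 : ℕ) : ℝ) - 1 - ℓ))))) *
        (∏ ℓ ∈ Finset.range j, ((-4) *
          ((((j : ℕ) : ℝ) - 1 - ℓ + 1) * (F + 1 - 2 * (j : ℝ) - ε + (((j : ℕ) : ℝ) - 1 - ℓ))))) := by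
        congr 1 <;> refine Finset.prod_congr rfl fun ℓ hℓ => ?_ <;> push_cast <;> ring
    _ = ((-4 : ℝ) ^ (j + 1) * ∏ i ∈ Finset.range (j + 1), ((F - 2 * (j : ℝ) + i) * (ε + i))) *
        ((-4 : ℝ) ^ j * ∏ i ∈ Finset.range j, (((i : ℝ) + 1) * (F + 1 - 2 * (j : ℝ) - ε + i))) := by
        rw [split_const, split_const, r12, r3]
    _ = _ := by
        rw [Finset.prod_mul_distrib, Finset.prod_mul_distrib, factProd]
        rw [show (-4 : ℝ) ^ (2 * j + 1) = (-4 : ℝ) ^ (j + 1) * (-4 : ℝ) ^ j by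
          rw [← pow_add]; congr 1; omega]
        ring

theorem stmt2 (n : ℕ) (hn : 1 ≤ n) (γ : ℝ) (hγ0 : 0 < γ) (hγ : ∀ m : ℕ, γ ≠ m)
    (hfl : 1 ≤ Nat.floor γ)
    (j : ℕ) (hj : j + Nat.floor (γ / 2) + 1 ≤ Nat.floor γ) :
    ∀ ρ : ℝ, 0 < ρ →
      ρ ^ (-(n : ℝ) - 1 + γ - 2 * j - 2 * (γ - Nat.floor γ)) *
        radProd n
          ((List.range (j + 1)).map (fun ℓ => (γ - 2 * ℓ) ^ 2) ++
            (List.range j).map (fun ℓ => (γ + 2 * ℓ - 2 * (Nat.floor γ : ℝ)) ^ 2))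
          (fun x => x ^ ((n : ℝ) + 1 - γ + 2 * j + 2 * (γ - Nat.floor γ))) ρ
      = -(4 ^ (2 * j + 1)) * (Nat.factorial j) *
          (Real.Gamma ((j : ℝ) + 1 + (γ - Nat.floor γ)) *
            Real.Gamma ((Nat.floor γ : ℝ) + 1 - j) *
            Real.Gamma ((Nat.floor γ : ℝ) + 1 - j - (γ - Nat.floor γ))) /
          (Real.Gamma (γ - Nat.floor γ) * Real.Gamma ((Nat.floor γ : ℝ) - 2 * j) *
            Real.Gamma ((Nat.floor γ : ℝ) + 1 - 2 * j - (γ - Nat.floor γ))) := by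
  intro ρ hρ
  rw [show ((List.range (j + 1)).map (fun ℓ => (γ - 2 * ℓ) ^ 2) : List ℝ)
      = (List.range (j + 1)).map (fun ℓ : ℕ => (γ - 2 * (ℓ : ℝ)) ^ 2) by
    simp only [List.pure_def, List.bind_eq_flatMap]
    rw [show ((List.range (j + 1)).flatMap fun a => [((a : ℕ) : ℝ)])
        = (List.range (j + 1)).map (fun a : ℕ => (a : ℝ)) from List.flatMap_pure_eq_map _ _,
      List.map_map]
    rfl]
  rw [show ((List.range j).map (fun ℓ => (γ + 2 * ℓ - 2 * (Nat.floor γ : ℝ)) ^ 2) : List ℝ)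
      = (List.range j).map (fun ℓ : ℕ => (γ + 2 * (ℓ : ℝ) - 2 * (Nat.floor γ : ℝ)) ^ 2) by
    simp only [List.pure_def, List.bind_eq_flatMap]
    rw [show ((List.range j).flatMap fun a => [((a : ℕ) : ℝ)])
        = (List.range j).map (fun a : ℕ => (a : ℝ)) from List.flatMap_pure_eq_map _ _,
      List.map_map]
    rfl]
  set F : ℝ := (Nat.floor γ : ℝ) with hF
  set ε : ℝ := γ - F with hε
  -- basic facts
  have hεpos : 0 < ε := by
    have h1 : F ≤ γ := Nat.floor_le hγ0.le
    have h2 : γ ≠ F := hγ (Nat.floor γ)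
    rw [hε]
    rcases lt_or_eq_of_le h1 with h | h
    · linarith
    · exact absurd h.symm h2
  have hεlt : ε < 1 := by
    have := Nat.lt_floor_add_one γ
    rw [hε]; linarith
  have h2j : 2 * j + 1 ≤ Nat.floor γ := by
    have h1 : γ / 2 < (Nat.floor (γ / 2) : ℝ) + 1 := Nat.lt_floor_add_one _
    have h2 : (Nat.floor γ : ℝ) ≤ γ := Nat.floor_le hγ0.le
    have h3 : (Nat.floor γ : ℝ) < ((2 * Nat.floor (γ / 2) + 2 : ℕ) : ℝ) := by
      push_cast; linarith
    have h4 : Nat.floor γ < 2 * Nat.floor (γ / 2) + 2 := by exact_mod_cast h3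
    omega
  have hFge : 2 * (j : ℝ) + 1 ≤ F := by
    rw [hF]
    have : ((2 * j + 1 : ℕ) : ℝ) ≤ (Nat.floor γ : ℝ) := by exact_mod_cast h2j
    push_cast at this; linarith
  set a : ℝ := (n : ℝ) + 1 - γ + 2 * j + 2 * ε with ha
  -- evaluate the differential operator
  have hyp : ∀ x ∈ Set.Ioi (0:ℝ), (fun x : ℝ => x ^ a) x = 1 * x ^ a := by
    intro x _; rw [one_mul]
  have key := radProd_rpow n a
    ((List.range (j + 1)).map (fun ℓ : ℕ => (γ - 2 * (ℓ : ℝ)) ^ 2) ++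
      (List.range j).map (fun ℓ : ℕ => (γ + 2 * (ℓ : ℝ) - 2 * F) ^ 2)) 1 _ hyp ρ hρ
  rw [key]
  set Q : ℝ := (((List.range (j + 1)).map (fun ℓ : ℕ => (γ - 2 * (ℓ : ℝ)) ^ 2) ++
      (List.range j).map (fun ℓ : ℕ => (γ + 2 * (ℓ : ℝ) - 2 * F) ^ 2)).map
      (fun c => (a - n - 1) ^ 2 - c)).prod with hQ
  have hcollapse : ρ ^ (-(n : ℝ) - 1 + γ - 2 * j - 2 * ε) * (Q * 1 * ρ ^ a) = Q := by
    rw [mul_one, show -(n : ℝ) - 1 + γ - 2 * j - 2 * ε = -a by rw [ha]; ring,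
      show ρ ^ (-a) * (Q * ρ ^ a) = Q * (ρ ^ (-a) * ρ ^ a) by ring,
      ← Real.rpow_add hρ]
    simp
  rw [hcollapse]
  -- compute Q as finite products
  have hQ2 : Q = (∏ ℓ ∈ Finset.range (j + 1), ((ε + 2 * j - F) ^ 2 - ((F + ε) - 2 * ℓ) ^ 2)) *
      (∏ ℓ ∈ Finset.range j, ((ε + 2 * j - F) ^ 2 - ((F + ε) + 2 * ℓ - 2 * F) ^ 2)) := by
    rw [hQ, List.map_append, List.prod_append, List.map_map, List.map_map,
      list_prod_range, list_prod_range]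
    congr 1 <;> refine Finset.prod_congr rfl fun ℓ _ => ?_ <;>
      simp only [Function.comp_apply] <;> rw [ha, hε] <;> ring
  rw [hQ2, bigProd ε F j]
  -- Gamma identities
  have hx1 : ∀ i : ℕ, i < j + 1 → ε + i ≠ 0 := fun i _ => by positivity
  have hx2 : ∀ i : ℕ, i < j + 1 → F - 2 * (j : ℝ) + i ≠ 0 := by
    intro i _
    have : (0:ℝ) ≤ i := Nat.cast_nonneg i
    nlinarith
  have hx3 : ∀ i : ℕ, i < j → F + 1 - 2 * (j : ℝ) - ε + i ≠ 0 := by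
    intro i _
    have : (0:ℝ) ≤ i := Nat.cast_nonneg i
    nlinarith
  have g1 : Real.Gamma ((j : ℝ) + 1 + ε) =
      (∏ i ∈ Finset.range (j + 1), (ε + i)) * Real.Gamma ε := by
    rw [show (j : ℝ) + 1 + ε = ε + ((j + 1 : ℕ) : ℝ) by push_cast; ring]
    exact gammaProd ε (j + 1) hx1
  have g2 : Real.Gamma (F + 1 - j) =
      (∏ i ∈ Finset.range (j + 1), (F - 2 * (j : ℝ) + i)) * Real.Gamma (F - 2 * j) := by
    rw [show F + 1 - (j : ℝ) = (F - 2 * j) + ((j + 1 : ℕ) : ℝ) by push_cast; ring]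
    exact gammaProd (F - 2 * j) (j + 1) hx2
  have g3 : Real.Gamma (F + 1 - j - ε) =
      (∏ i ∈ Finset.range j, (F + 1 - 2 * (j : ℝ) - ε + i)) *
        Real.Gamma (F + 1 - 2 * j - ε) := by
    rw [show F + 1 - (j : ℝ) - ε = (F + 1 - 2 * j - ε) + ((j : ℕ) : ℝ) by push_cast; ring]
    exact gammaProd (F + 1 - 2 * j - ε) j hx3
  have hne1 : Real.Gamma ε ≠ 0 := (Real.Gamma_pos_of_pos hεpos).ne'
  have hne2 : Real.Gamma (F - 2 * j) ≠ 0 := by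
    refine (Real.Gamma_pos_of_pos ?_).ne'; linarith
  have hne3 : Real.Gamma (F + 1 - 2 * j - ε) ≠ 0 := by
    refine (Real.Gamma_pos_of_pos ?_).ne'; linarith
  rw [g1, g2, g3]
  rw [show (-4 : ℝ) ^ (2 * j + 1) = -(4 : ℝ) ^ (2 * j + 1) by
    exact Odd.neg_pow ⟨j, by ring⟩ 4]
  field_simp
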